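/- Let W be a linear subspace of a symplectic vector space V with ω-compatible complex structure J. The totally real symplectic parts of W and of W^ω have the same dimension: dim W₊^θ = dim W₋^θ, where W₊^θ is the g-orthogonal complement of W₀ ⊕ (W∩JW) in W and W₋^θ is the g-orthogonal complement of W₀ ⊕ (W^ω∩JW^ω) in W^ω. -/

import Mathlib

open Module LinearMap.BilinForm

section Aux

variable {V : Type*} [AddCommGroup V] [Module ℝ V] [FiniteDimensional ℝ V]

/-- Dimension formula for the orthogonal complement of `U ≤ W` inside `W`,
for a symmetric positive definite bilinear form. -/
theorem finrank_inf_orthogonal_add (B : LinearMap.BilinForm ℝ V)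
    (hsymm : ∀ u v : V, B u v = B v u)
    (hpos : ∀ v : V, v ≠ 0 → 0 < B v v) {U W : Submodule ℝ V} (hUW : U ≤ W) :
    finrank ℝ (W ⊓ B.orthogonal U : Submodule ℝ V) + finrank ℝ U = finrank ℝ W := by
  have hdef : ∀ v : V, B v v = 0 → v = 0 := by
    intro v hv
    by_contra h
    exact absurd hv (ne_of_gt (hpos v h))
  have hrefl : B.IsRefl := fun x y h => by rw [hsymm]; exact h
  have hnd : B.Nondegenerate := ⟨fun m hm => hdef m (hm m), fun m hm => hdef m (hm m)⟩
  have hdisj : U ⊓ (W ⊓ B.orthogonal U : Submodule ℝ V) = ⊥ := by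
    rw [eq_bot_iff]
    intro v hv
    obtain ⟨hvU, _, hvO⟩ := hv
    exact hdef v (hvO v hvU)
  have hle : finrank ℝ U + finrank ℝ (W ⊓ B.orthogonal U : Submodule ℝ V) ≤ finrank ℝ W := by
    have h1 := Submodule.finrank_sup_add_finrank_inf_eq U (W ⊓ B.orthogonal U : Submodule ℝ V)
    rw [hdisj, finrank_bot, add_zero] at h1
    rw [← h1]
    exact Submodule.finrank_mono (sup_le hUW inf_le_left)
  have hO : finrank ℝ (B.orthogonal U) = finrank ℝ V - finrank ℝ U :=
    finrank_orthogonal hnd U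
  have hUle : finrank ℝ U ≤ finrank ℝ V := U.finrank_le
  have h2 := Submodule.finrank_sup_add_finrank_inf_eq W (B.orthogonal U)
  have h3 : finrank ℝ (W ⊔ B.orthogonal U : Submodule ℝ V) ≤ finrank ℝ V :=
    Submodule.finrank_le _
  have hWle : finrank ℝ W ≤ finrank ℝ V := W.finrank_le
  omega

end Aux

/-- The symplectic complement `W^ω = {v | ω v w = 0 for all w ∈ W}`. -/
def sympCompl {V : Type*} [AddCommGroup V] [Module ℝ V]
    (ω : V →ₗ[ℝ] V →ₗ[ℝ] ℝ) (W : Submodule ℝ V) : Submodule ℝ V where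
  carrier := {v | ∀ w ∈ W, ω v w = 0}
  add_mem' := by
    intro a b ha hb w hw
    simp only [Set.mem_setOf_eq] at ha hb
    simp [ha w hw, hb w hw]
  zero_mem' := by intro w hw; simp
  smul_mem' := by
    intro c a ha w hw
    simp only [Set.mem_setOf_eq] at ha
    simp [ha w hw]

/-- The `g`-orthogonal complement of a subspace, where `g u v = ω u (J v)`. -/
def gOrtho {V : Type*} [AddCommGroup V] [Module ℝ V]
    (ω : V →ₗ[ℝ] V →ₗ[ℝ] ℝ) (J : V →ₗ[ℝ] V) (U : Submodule ℝ V) : Submodule ℝ V where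
  carrier := {v | ∀ u ∈ U, ω v (J u) = 0}
  add_mem' := by
    intro a b ha hb u hu
    simp only [Set.mem_setOf_eq] at ha hb
    simp [ha u hu, hb u hu]
  zero_mem' := by intro u hu; simp
  smul_mem' := by
    intro c a ha u hu
    simp only [Set.mem_setOf_eq] at ha
    simp [ha u hu]

/-- The totally real symplectic parts of `W` and `W^ω` have the same dimension:
`dim W₊^θ = dim W₋^θ`, where `W₊^θ` is the `g`-orthogonal complement of
`W₀ ⊕ (W ∩ JW)` in `W` and `W₋^θ` is the `g`-orthogonal complement of
`W₀ ⊕ (W^ω ∩ JW^ω)` in `W^ω`. -/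
theorem totally_real_parts_same_dim {V : Type*} [AddCommGroup V] [Module ℝ V]
    [FiniteDimensional ℝ V]
    (ω : V →ₗ[ℝ] V →ₗ[ℝ] ℝ)
    (halt : ∀ v, ω v v = 0)
    (hnd : ∀ v, (∀ w, ω v w = 0) → v = 0)
    (n : ℕ) (hdim : Module.finrank ℝ V = 2 * n)
    (J : V →ₗ[ℝ] V)
    (hJ2 : ∀ v, J (J v) = -v)
    (hJω : ∀ u v, ω (J u) (J v) = ω u v)
    (hJpos : ∀ v, v ≠ 0 → 0 < ω v (J v))
    (W : Submodule ℝ V) :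
    Module.finrank ℝ
        (W ⊓ gOrtho ω J ((W ⊓ sympCompl ω W) ⊔ (W ⊓ Submodule.map J W)) : Submodule ℝ V) =
      Module.finrank ℝ
        (sympCompl ω W ⊓ gOrtho ω J ((W ⊓ sympCompl ω W) ⊔
          (sympCompl ω W ⊓ Submodule.map J (sympCompl ω W))) : Submodule ℝ V) := by
    -- Antisymmetry of ω
  have hanti : ∀ u v : V, ω u v = -ω v u := by
    intro u v
    have h := halt (u + v)
    simp only [map_add, LinearMap.add_apply] at h
    rw [halt u, halt v] at h
    linarith
  -- ω as a reflexive nondegenerate bilinear form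
  have hωrefl : ω.IsRefl := fun x y h => by rw [hanti]; simp [h]
  have hωnd : LinearMap.BilinForm.Nondegenerate ω :=
    ⟨fun m hm => hnd m hm, fun m hm => hnd m (fun w => hωrefl w m (hm w))⟩
  -- sympCompl is the BilinForm orthogonal
  have hsc : ∀ U : Submodule ℝ V, sympCompl ω U = LinearMap.BilinForm.orthogonal ω U := by
    intro U
    ext v
    constructor
    · intro hv u hu
      exact hωrefl v u (hv u hu)
    · intro hv u hu
      exact hωrefl u v (hv u hu)
  -- finrank of symplectic complements
  have hscrank : ∀ U : Submodule ℝ V,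
      finrank ℝ U + finrank ℝ (sympCompl ω U) = 2 * n := by
    intro U
    rw [hsc U, finrank_orthogonal hωnd U, ← hdim]
    have := U.finrank_le
    omega
  -- the metric g as a bilinear form
  set B : LinearMap.BilinForm ℝ V := ω.compl₂ J with hB
  have hBapp : ∀ u v : V, B u v = ω u (J v) := fun u v => rfl
  have hBsymm : ∀ u v : V, B u v = B v u := by
    intro u v
    rw [hBapp, hBapp, ← hJω u (J v), hJ2 v, map_neg, hanti v (J u)]
  have hBpos : ∀ v : V, v ≠ 0 → 0 < B v v := fun v hv => hJpos v hv
  -- gOrtho is the BilinForm orthogonal for B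
  have hgo : ∀ U : Submodule ℝ V, gOrtho ω J U = B.orthogonal U := by
    intro U
    ext v
    constructor
    · intro hv u hu
      show B u v = 0
      rw [hBsymm]
      exact hv u hu
    · intro hv u hu
      show B v u = 0
      rw [hBsymm]
      exact hv u hu
  -- abbreviations
  set W0 : Submodule ℝ V := W ⊓ sympCompl ω W with hW0
  set Wc : Submodule ℝ V := sympCompl ω W with hWc
  set W1 : Submodule ℝ V := W ⊓ Submodule.map J W with hW1
  set W1' : Submodule ℝ V := Wc ⊓ Submodule.map J Wc with hW1'
  -- J gives a linear equivalence
  have hJbij : Function.Bijective J := by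
    constructor
    · intro a b hab
      have : J (J a) = J (J b) := by rw [hab]
      rwa [hJ2, hJ2, neg_inj] at this
    · intro v
      exact ⟨-(J v), by rw [map_neg, hJ2, neg_neg]⟩
  have hJrank : ∀ U : Submodule ℝ V, finrank ℝ (Submodule.map J U) = finrank ℝ U := by
    intro U
    exact LinearEquiv.finrank_map_eq (LinearEquiv.ofBijective J hJbij) U
  -- W0 ⊓ W1 = ⊥ and W0 ⊓ W1' = ⊥
  have hd1 : W0 ⊓ W1 = ⊥ := by
    rw [eq_bot_iff]
    rintro v ⟨⟨hvW, hvWc⟩, -, w, hwW, rfl⟩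
    have h0 : ω (J w) w = 0 := hvWc w hwW
    rw [hanti] at h0
    by_cases hw : w = 0
    · simp [hw]
    · exact absurd (neg_eq_zero.mp h0) (ne_of_gt (hJpos w hw))
  have hd2 : W0 ⊓ W1' = ⊥ := by
    rw [eq_bot_iff]
    rintro v ⟨⟨hvW, hvWc⟩, -, u, huWc, rfl⟩
    have h0 : ω u (J u) = 0 := huWc (J u) hvW
    by_cases hu : u = 0
    · simp [hu]
    · exact absurd h0 (ne_of_gt (hJpos u hu))
  -- J(Wc) = sympCompl (J W)
  have hJWc : Submodule.map J Wc = sympCompl ω (Submodule.map J W) := by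
    ext v
    constructor
    · rintro ⟨u, hu, rfl⟩ w' ⟨w, hw, rfl⟩
      rw [hJω]
      exact hu w hw
    · intro hv
      refine ⟨-(J v), ?_, by rw [map_neg, hJ2, neg_neg]⟩
      intro w hw
      have h1 : ω v (J w) = 0 := hv (J w) ⟨w, hw, rfl⟩
      have h2 : ω (J v) w = 0 := by
        rw [← hJω (J v) w, hJ2 v, map_neg, LinearMap.neg_apply, h1, neg_zero]
      rw [map_neg, LinearMap.neg_apply, h2, neg_zero]
  -- sympCompl of a sup
  have hsup : sympCompl ω (W ⊔ Submodule.map J W) =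
      Wc ⊓ sympCompl ω (Submodule.map J W) := by
    ext v
    constructor
    · intro hv
      exact ⟨fun w hw => hv w (Submodule.mem_sup_left hw),
             fun w hw => hv w (Submodule.mem_sup_right hw)⟩
    · rintro ⟨h1, h2⟩ w hw
      obtain ⟨a, ha, b, hb, rfl⟩ := Submodule.mem_sup.mp hw
      rw [map_add]
      rw [h1 a ha, h2 b hb, add_zero]
  have hW1'eq : W1' = sympCompl ω (W ⊔ Submodule.map J W) := by
    rw [hsup, hW1', hJWc]
  -- dimension bookkeeping
  have e1 : finrank ℝ
      (W ⊓ gOrtho ω J (W0 ⊔ W1) : Submodule ℝ V) + finrank ℝ (W0 ⊔ W1 : Submodule ℝ V)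
      = finrank ℝ W := by
    rw [hgo]
    exact finrank_inf_orthogonal_add B hBsymm hBpos
      (sup_le (hW0 ▸ inf_le_left) (hW1 ▸ inf_le_left))
  have e2 : finrank ℝ
      (Wc ⊓ gOrtho ω J (W0 ⊔ W1') : Submodule ℝ V) + finrank ℝ (W0 ⊔ W1' : Submodule ℝ V)
      = finrank ℝ Wc := by
    rw [hgo]
    exact finrank_inf_orthogonal_add B hBsymm hBpos
      (sup_le (hW0 ▸ inf_le_right) (hW1' ▸ inf_le_left))
  have e3 : finrank ℝ (W0 ⊔ W1 : Submodule ℝ V) = finrank ℝ W0 + finrank ℝ W1 := by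
    have := Submodule.finrank_sup_add_finrank_inf_eq W0 W1
    rw [hd1, finrank_bot, add_zero] at this
    exact this
  have e4 : finrank ℝ (W0 ⊔ W1' : Submodule ℝ V) = finrank ℝ W0 + finrank ℝ W1' := by
    have := Submodule.finrank_sup_add_finrank_inf_eq W0 W1'
    rw [hd2, finrank_bot, add_zero] at this
    exact this
  have e5 : finrank ℝ W + finrank ℝ Wc = 2 * n := hscrank W
  have e6 : finrank ℝ (W ⊔ Submodule.map J W : Submodule ℝ V) + finrank ℝ W1'
      = 2 * n := by
    rw [hW1'eq]
    exact hscrank _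
  have e7 : finrank ℝ (W ⊔ Submodule.map J W : Submodule ℝ V) + finrank ℝ W1
      = finrank ℝ W + finrank ℝ (Submodule.map J W) :=
    Submodule.finrank_sup_add_finrank_inf_eq W (Submodule.map J W)
  have e8 : finrank ℝ (Submodule.map J W) = finrank ℝ W := hJrank W
  omega
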